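/- The set of common periods of two overlaid cubic lattices, namely ℤ³ ∩ R·ℤ³ for a rotation matrix R ∈ SO(3), spans ℝ³ (i.e., contains three linearly independent vectors) if and only if all entries of R are rational numbers. -/

import Mathlib

open Matrix

/-- A vector in ℝ³ with all integer entries, i.e. an element of ℤ³ ⊂ ℝ³. -/
def IsIntVec (v : Fin 3 → ℝ) : Prop := ∀ i, ∃ n : ℤ, v i = (n : ℝ)

/-- A 3×3 real matrix with all rational entries. -/
def IsRatMat (R : Matrix (Fin 3) (Fin 3) ℝ) : Prop := ∀ i j, ∃ q : ℚ, R i j = (q : ℝ)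

/-- Membership in ℤ³ ∩ R·ℤ³. -/
def InMoire (R : Matrix (Fin 3) (Fin 3) ℝ) (u : Fin 3 → ℝ) : Prop :=
  IsIntVec u ∧ ∃ a : Fin 3 → ℝ, IsIntVec a ∧ R.mulVec a = u

lemma rat_mul_int (q : ℚ) (d : ℤ) (h : (q.den : ℤ) ∣ d) : ∃ n : ℤ, (q * (d : ℚ)) = (n : ℚ) := by
  obtain ⟨c, hc⟩ := h
  refine ⟨q.num * c, ?_⟩
  rw [hc]
  push_cast
  rw [← mul_assoc, Rat.mul_den_eq_num]

/-- ℤ³ ∩ R·ℤ³ contains three linearly independent vectors iff R has rational entries. -/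
theorem moire_commensurate_iff_rational (R : Matrix (Fin 3) (Fin 3) ℝ)
    (hO : R ∈ Matrix.orthogonalGroup (Fin 3) ℝ) (hdet : R.det = 1) :
    (∃ u : Fin 3 → (Fin 3 → ℝ), (∀ k, InMoire R (u k)) ∧ LinearIndependent ℝ u) ↔
      IsRatMat R := by
  constructor
  · rintro ⟨u, hu, hli⟩
    have hint : ∀ k, IsIntVec (u k) := fun k => (hu k).1
    choose a haint ha using fun k => (hu k).2
    choose nu hnu using hint
    choose na hna using haint
    set Az : Matrix (Fin 3) (Fin 3) ℤ := Matrix.of fun i k => na k i with hAz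
    set Uz : Matrix (Fin 3) (Fin 3) ℤ := Matrix.of fun i k => nu k i with hUz
    set A : Matrix (Fin 3) (Fin 3) ℝ := Az.map (Int.cast) with hA
    set U : Matrix (Fin 3) (Fin 3) ℝ := Uz.map (Int.cast) with hU
    have hAe : ∀ i k, A i k = a k i := fun i k => (hna k i).symm
    have hUe : ∀ i k, U i k = u k i := fun i k => (hnu k i).symm
    -- R * A = U
    have hRA : R * A = U := by
      ext i k
      rw [Matrix.mul_apply, hUe]
      have := congrFun (ha k) i
      rw [Matrix.mulVec, dotProduct] at this
      rw [← this]
      exact Finset.sum_congr rfl fun j _ => by rw [hAe]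
    -- det U ≠ 0
    have hUunit : IsUnit (Matrix.of u) := by
      rw [← Matrix.linearIndependent_rows_iff_isUnit]
      exact hli
    have hUdet : U.det ≠ 0 := by
      have h1 : U = (Matrix.of u)ᵀ := by
        ext i k; rw [hUe]; rfl
      rw [h1, Matrix.det_transpose]
      exact (Matrix.isUnit_iff_isUnit_det _ |>.mp hUunit).ne_zero
    have hAdet : A.det ≠ 0 := by
      intro h0
      apply hUdet
      rw [← hRA, Matrix.det_mul, h0, mul_zero]
    have hAunit : IsUnit A.det := isUnit_iff_ne_zero.mpr hAdet
    -- R = U * A⁻¹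
    have hR : R = U * A⁻¹ := by
      rw [← hRA, Matrix.mul_assoc, Matrix.mul_nonsing_inv A hAunit, Matrix.mul_one]
    -- casts
    have hAmm : A = (Int.castRingHom ℝ).mapMatrix Az := rfl
    have hdetA : A.det = ((Az.det : ℤ) : ℝ) := by
      rw [hAmm, ← RingHom.map_det]; rfl
    have hadj : A.adjugate = (Az.adjugate).map (Int.cast) := by
      rw [hAmm, ← RingHom.map_adjugate]; rfl
    have key : U * A.adjugate = A.det • R := by
      rw [← hRA, Matrix.mul_assoc, Matrix.mul_adjugate, Matrix.mul_smul, Matrix.mul_one]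
    intro i j
    refine ⟨((∑ k, Uz i k * Az.adjugate k j : ℤ) : ℚ) / ((Az.det : ℤ) : ℚ), ?_⟩
    have hdz : ((Az.det : ℤ) : ℝ) ≠ 0 := by rw [← hdetA]; exact hAdet
    have key2 : A.det * R i j = ∑ k, U i k * A.adjugate k j := by
      have h := congrFun (congrFun key i) j
      rw [Matrix.mul_apply, Matrix.smul_apply, smul_eq_mul] at h
      exact h.symm
    rw [Rat.cast_div, Rat.cast_intCast, Rat.cast_intCast]
    rw [eq_div_iff (by exact_mod_cast hdz)]
    have : R i j * ((Az.det : ℤ) : ℝ) = ∑ k, U i k * A.adjugate k j := by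
      rw [← key2, hdetA]; ring
    rw [this]
    push_cast
    refine Finset.sum_congr rfl fun k _ => ?_
    rw [hadj, Matrix.map_apply, hU, Matrix.map_apply]
  · intro hQ
    choose q hq using hQ
    set d : ℤ := ∏ p : Fin 3 × Fin 3, ((q p.1 p.2).den : ℤ) with hd
    have hdpos : 0 < d := by
      apply Finset.prod_pos
      intro p _
      exact_mod_cast (q p.1 p.2).pos
    have hdvd : ∀ i k, ((q i k).den : ℤ) ∣ d := by
      intro i k
      exact Finset.dvd_prod_of_mem (fun p => ((q p.1 p.2).den : ℤ)) (Finset.mem_univ (i, k))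
    refine ⟨fun k i => (d : ℝ) * R i k, ?_, ?_⟩
    · intro k
      refine ⟨?_, fun j => if j = k then (d : ℝ) else 0, ?_, ?_⟩
      · intro i
        obtain ⟨n, hn⟩ := rat_mul_int (q i k) d (hdvd i k)
        refine ⟨n, ?_⟩
        show (d : ℝ) * R i k = (n : ℝ)
        rw [hq i k]
        have h2 := congrArg (fun x : ℚ => (x : ℝ)) hn
        push_cast at h2
        linarith
      · intro j
        by_cases h : j = k
        · exact ⟨d, by simp [h]⟩
        · exact ⟨0, by simp [h]⟩
      · ext i
        rw [Matrix.mulVec, dotProduct]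
        simp [Finset.sum_ite_eq, mul_comm]
    · have h1 : (Matrix.of fun k i => (d : ℝ) * R i k) = (d : ℝ) • Rᵀ := by
        ext k i; simp [Matrix.smul_apply, Matrix.transpose_apply]
      rw [show (fun k i => (d : ℝ) * R i k) = fun k => (Matrix.of fun k i => (d : ℝ) * R i k) k from rfl]
      change LinearIndependent ℝ (Matrix.row (Matrix.of fun k i => (d : ℝ) * R i k))
      rw [Matrix.linearIndependent_rows_iff_isUnit]
      rw [Matrix.isUnit_iff_isUnit_det, h1, Matrix.det_smul, Matrix.det_transpose, hdet]
      simp only [mul_one]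
      apply isUnit_iff_ne_zero.mpr
      positivity
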